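/- arXiv:1505.00597 — 2 statements merged into one kernel-verified Lean document; each statement's English description precedes it below -/
import Mathlib

section
/- Assume (Sld) holds for the nonlinear conditional expectation operator ℰ, with associated constant L > 1 and family 𝒬. Fix (σ,τ) ∈ 𝒯₂ and ξ, ξ' ∈ L^p(ℱ_τ). Then: (i) there exists ℚ ∈ 𝒬 such that ℰ_{σ,τ}[ξ] − ℰ_{σ,τ}[ξ'] ≤ E^ℚ[|ξ − ξ'| | ℱ_σ] a.s. (non-expansiveness); (ii) if ξ ≤ ξ' a.s., then ℰ_{σ,τ}[ξ] ≤ ℰ_{σ,τ}[ξ'] a.s. (monotonicity), and moreover ℰ_{σ,τ}[ξ] < ℰ_{σ,τ}[ξ'] a.s. on the event {ℙ[ξ < ξ' | ℱ_σ] > 0} (strict monotonicity). -/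
open MeasureTheory Filter Set Topology
open scoped ENNReal NNReal

noncomputable section

namespace BPT

variable {Ω : Type*} [m0 : MeasurableSpace Ω]

/-- `σ ∈ 𝒯` : a stopping time (for the filtration `ℱ`) a.s. valued in `[0, T]`. -/
def MemT (μ : Measure Ω) (ℱ : Filtration ℝ m0) (T : ℝ) (σ : Ω → ℝ) : Prop :=
  IsStoppingTime ℱ (fun ω => (σ ω : WithTop ℝ)) ∧ ∀ᵐ ω ∂μ, σ ω ∈ Set.Icc (0 : ℝ) T

/-- `(σ, τ) ∈ 𝒯₂` : σ ∈ 𝒯 and τ ∈ 𝒯_σ. -/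
def MemT2 (μ : Measure Ω) (ℱ : Filtration ℝ m0) (T : ℝ) (σ τ : Ω → ℝ) : Prop :=
  MemT μ ℱ T σ ∧ MemT μ ℱ T τ ∧ ∀ᵐ ω ∂μ, σ ω ≤ τ ω

/-- `ξ ∈ L^p(ℱ_τ)` : `ξ` is `ℱ_τ`-measurable and `p`-integrable. -/
def MemLpAt (μ : Measure Ω) (ℱ : Filtration ℝ m0) (p : ℝ≥0∞) (τ : Ω → ℝ) (ξ : Ω → ℝ) : Prop :=
  MemLp ξ p μ ∧ ∀ hτ : IsStoppingTime ℱ (fun ω => (τ ω : WithTop ℝ)), Measurable[hτ.measurableSpace] ξ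

/-- The negative part `ξ⁻` of a random variable. -/
def negPart (ξ : Ω → ℝ) : Ω → ℝ := fun ω => max (-(ξ ω)) 0

/-- The type of (nonlinear) conditional expectation operators `(σ, τ, ξ) ↦ ℰ_{σ,τ}[ξ]`. -/
abbrev NLEOp (Ω : Type*) : Type _ := (Ω → ℝ) → (Ω → ℝ) → (Ω → ℝ) → Ω → ℝ

/-- Assumption (Tc): time consistency. -/
def Tc (μ : Measure Ω) (ℱ : Filtration ℝ m0) (T : ℝ) (p : ℝ≥0∞) (E : NLEOp Ω) : Prop :=
  (∀ τ ξ, MemT μ ℱ T τ → MemLpAt μ ℱ p τ ξ → E τ τ ξ =ᵐ[μ] ξ) ∧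
  (∀ τ₁ τ₂ τ₃ ξ, MemT μ ℱ T τ₁ → MemT μ ℱ T τ₂ → MemT μ ℱ T τ₃ →
    (∀ᵐ ω ∂μ, τ₁ ω ≤ τ₂ ω) → (∀ᵐ ω ∂μ, τ₂ ω ≤ τ₃ ω) → MemLpAt μ ℱ p τ₃ ξ →
    E τ₁ τ₂ (E τ₂ τ₃ ξ) =ᵐ[μ] E τ₁ τ₃ ξ) ∧
  (∀ τ₁ τ₂ τ₃ ξ, MemT μ ℱ T τ₁ → MemT μ ℱ T τ₂ → MemT μ ℱ T τ₃ →
    (∀ᵐ ω ∂μ, max (τ₁ ω) (τ₂ ω) ≤ τ₃ ω) → MemLpAt μ ℱ p τ₃ ξ →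
    ∀ᵐ ω ∂μ, τ₁ ω = τ₂ ω → E τ₁ τ₃ ξ ω = E τ₂ τ₃ ξ ω)

/-- Assumption (S)(a). -/
def Sa (μ : Measure Ω) (ℱ : Filtration ℝ m0) (T : ℝ) (p : ℝ≥0∞) (E : NLEOp Ω) : Prop :=
  ∀ s : ℝ, s ∈ Set.Ico (0 : ℝ) T →
  ∀ sn : ℕ → ℝ, (∀ n, sn n ∈ Set.Icc s T) → Antitone sn → Tendsto sn atTop (𝓝 s) →
  ∀ ξ : Ω → ℝ, Measurable[ℱ s] ξ →
  ∀ ξn : ℕ → Ω → ℝ, (∀ n, MemLpAt μ ℱ p (fun _ => sn n) (ξn n)) →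
  (∃ C : ℝ≥0∞, C ≠ ⊤ ∧ ∀ n, eLpNorm (negPart (ξn n)) p μ ≤ C) →
  (∀ᵐ ω ∂μ, Tendsto (fun n => ξn n ω) atTop (𝓝 (ξ ω))) →
  ∀ᵐ ω ∂μ, ξ ω ≤ Filter.limsup (fun n => E (fun _ => s) (fun _ => sn n) (ξn n) ω) atTop

/-- Assumption (S)(b). -/
def Sb (μ : Measure Ω) (ℱ : Filtration ℝ m0) (T : ℝ) (p : ℝ≥0∞) (E : NLEOp Ω) : Prop :=
  ∀ σ τ : Ω → ℝ, ∀ σn : ℕ → Ω → ℝ, MemT μ ℱ T σ → MemT μ ℱ T τ →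
  (∀ n, MemT μ ℱ T (σn n)) →
  (∀ᵐ ω ∂μ, Antitone (fun n => σn n ω) ∧ Tendsto (fun n => σn n ω) atTop (𝓝 (σ ω)) ∧
    ∀ n, σn n ω ≤ τ ω) →
  ∀ ξ : Ω → ℝ, MemLpAt μ ℱ p τ ξ →
  ∀ᵐ ω ∂μ, E σ τ ξ ω ≤ Filter.limsup (fun n => E (σn n) τ ξ ω) atTop

/-- Assumption (S)(c). -/
def Sc (μ : Measure Ω) (ℱ : Filtration ℝ m0) (T : ℝ) (p : ℝ≥0∞) (E : NLEOp Ω) : Prop :=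
  ∀ σ τ : Ω → ℝ, MemT2 μ ℱ T σ τ →
  ∀ ξn : ℕ → Ω → ℝ, ∀ ξ : Ω → ℝ, (∀ n, MemLpAt μ ℱ p τ (ξn n)) → MemLp ξ p μ →
  (∀ᵐ ω ∂μ, Monotone (fun n => ξn n ω) ∧ Tendsto (fun n => ξn n ω) atTop (𝓝 (ξ ω))) →
  ∀ᵐ ω ∂μ, E σ τ ξ ω ≤ Filter.limsup (fun n => E σ τ (ξn n) ω) atTop

/-- Assumption (S). -/
def SAssumption (μ : Measure Ω) (ℱ : Filtration ℝ m0) (T : ℝ) (p : ℝ≥0∞) (E : NLEOp Ω) : Prop :=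
  Sa μ ℱ T p E ∧ Sb μ ℱ T p E ∧ Sc μ ℱ T p E

/-- Assumption (Sld), with constant `L > 1`, conjugate exponent `q` of `p`,
and family `𝒬` of equivalent probability measures. -/
def Sld (μ : Measure Ω) (ℱ : Filtration ℝ m0) (T : ℝ) (p q : ℝ≥0∞) (E : NLEOp Ω)
    (L : ℝ) (𝒬 : Set (Measure Ω)) : Prop :=
  (∀ Q ∈ 𝒬, IsProbabilityMeasure Q ∧ Q ≪ μ ∧ μ ≪ Q) ∧
  (∀ Q ∈ 𝒬, ∫⁻ ω, (Q.rnDeriv μ ω) ^ q.toReal + (Q.rnDeriv μ ω) ^ (1 - q.toReal) ∂μ ≤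
    ENNReal.ofReal L) ∧
  (∀ Q1 ∈ 𝒬, ∀ Q2 ∈ 𝒬, ∀ τ : Ω → ℝ, MemT μ ℱ T τ →
    ∀ hτ : IsStoppingTime ℱ (fun ω => (τ ω : WithTop ℝ)), ∃ M ∈ 𝒬, ∀ ξ : Ω → ℝ, Measurable ξ →
      (∃ C : ℝ, ∀ ω, |ξ ω| ≤ C) →
      ∫ ω, ξ ω ∂M = ∫ ω, (Q2[ξ | hτ.measurableSpace]) ω ∂Q1) ∧
  (∀ σ τ : Ω → ℝ, MemT2 μ ℱ T σ τ → ∀ ξ ξ' : Ω → ℝ,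
    MemLpAt μ ℱ p τ ξ → MemLpAt μ ℱ p τ ξ' →
    ∃ Q ∈ 𝒬, ∃ β : Ω → ℝ, Measurable β ∧ (∀ ω, β ω ∈ Set.Icc L⁻¹ 1) ∧
      ∀ hσ : IsStoppingTime ℱ (fun ω => (σ ω : WithTop ℝ)),
        ∀ᵐ ω ∂μ, E σ τ ξ ω ≤ E σ τ ξ' ω +
          (Q[fun ω' => β ω' * (ξ ω' - ξ' ω') | hσ.measurableSpace]) ω)

/-- `X` is an `ℰ`-supermartingale (in `X^p`). -/
def IsESupermartingale (μ : Measure Ω) (ℱ : Filtration ℝ m0) (T : ℝ) (p : ℝ≥0∞)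
    (E : NLEOp Ω) (X : ℝ → Ω → ℝ) : Prop :=
  ProgMeasurable ℱ X ∧
  (∀ τ : Ω → ℝ, MemT μ ℱ T τ → MemLpAt μ ℱ p τ (fun ω => X (τ ω) ω)) ∧
  ∀ σ τ : Ω → ℝ, MemT2 μ ℱ T σ τ →
    ∀ᵐ ω ∂μ, E σ τ (fun ω' => X (τ ω') ω') ω ≤ X (σ ω) ω

/-- `X` admits right limits `Xp t = X_{t+}` at every `t ∈ [0, T)` (the defining property of
membership in `X^p_r`, together with the supermartingale integrability). -/
def HasRightLim (T : ℝ) (X Xp : ℝ → Ω → ℝ) : Prop :=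
  ∀ ω, ∀ t ∈ Set.Ico (0 : ℝ) T, Tendsto (fun s => X s ω) (𝓝[>] t) (𝓝 (Xp t ω))

/-- The family `(X_t⁻)_{0 ≤ t ≤ T}` is bounded in `L^p`. -/
def NegPartBddLp (μ : Measure Ω) (p : ℝ≥0∞) (T : ℝ) (X : ℝ → Ω → ℝ) : Prop :=
  ∃ C : ℝ≥0∞, C ≠ ⊤ ∧ ∀ t ∈ Set.Icc (0 : ℝ) T, eLpNorm (negPart (X t)) p μ ≤ C

/-- The sum of the jumps on the right before time `t` :
`I_t(ω) = ∑_{0 ≤ s < t} (X_s(ω) - X_{s+}(ω))`. -/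
def jumpSum (X Xp : ℝ → Ω → ℝ) (t : ℝ) (ω : Ω) : ℝ :=
  ∑' s : Set.Ico (0 : ℝ) t, (X s.1 ω - Xp s.1 ω)


/-- Auxiliary: if `f ∈ L^p(μ)` and `dQ/dμ ∈ L^q(μ)` (with `p⁻¹ + q⁻¹ = 1`, `p > 1`),
then `f` is integrable with respect to `Q`. -/
lemma integrable_of_memLp_of_rnDeriv {μ Q : Measure Ω} [IsFiniteMeasure Q] [SigmaFinite μ]
    {p q : ℝ≥0∞} (hp : 1 < p) (hpq : p⁻¹ + q⁻¹ = 1) {L : ℝ} (hQμ : Q ≪ μ)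
    (hbd : ∫⁻ ω, (Q.rnDeriv μ ω) ^ q.toReal + (Q.rnDeriv μ ω) ^ (1 - q.toReal) ∂μ ≤
      ENNReal.ofReal L)
    {f : Ω → ℝ} (hf : MemLp f p μ) : Integrable f Q := by
  have hsm : AEStronglyMeasurable f Q := hf.1.mono_ac hQμ
  by_cases hptop : p = ∞
  · subst hptop
    have hfin : eLpNormEssSup f μ ≠ ∞ := by
      have := hf.2
      rwa [eLpNorm_exponent_top, lt_top_iff_ne_top] at this
    have hC : ∀ᵐ ω ∂μ, ‖f ω‖ ≤ (eLpNormEssSup f μ).toReal := by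
      filter_upwards [ae_le_eLpNormEssSup (f := f) (μ := μ)] with ω hω
      have h2 := ENNReal.toReal_mono hfin hω
      simpa using h2
    exact (memLp_top_of_bound hsm _ (hC.filter_mono hQμ.ae_le)).integrable le_top
  · have hp0 : p ≠ 0 := (zero_lt_one.trans hp).ne'
    have hq_ne_top : q ≠ ∞ := by
      intro h
      rw [h, ENNReal.inv_top, add_zero] at hpq
      exact absurd (ENNReal.inv_eq_one.mp hpq) hp.ne'
    have hq0 : q ≠ 0 := by
      intro h
      rw [h, ENNReal.inv_zero] at hpq
      simp at hpq
    have hconj : (p.toReal).HolderConjugate q.toReal := by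
      refine Real.holderConjugate_iff.mpr ⟨?_, ?_⟩
      · have := (ENNReal.toReal_lt_toReal (by simp) hptop).mpr hp
        simpa using this
      · have h := congrArg ENNReal.toReal hpq
        rw [ENNReal.toReal_add (ENNReal.inv_ne_top.mpr hp0) (ENNReal.inv_ne_top.mpr hq0),
          ENNReal.toReal_inv, ENNReal.toReal_inv, ENNReal.toReal_one] at h
        exact h
    set D := Q.rnDeriv μ with hD
    have hmeasD : Measurable D := Measure.measurable_rnDeriv Q μ
    have hfm : AEMeasurable (fun ω => (‖f ω‖₊ : ℝ≥0∞)) μ := hf.1.enorm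
    have hQint : ∫⁻ ω, (‖f ω‖₊ : ℝ≥0∞) ∂Q = ∫⁻ ω, D ω * (‖f ω‖₊ : ℝ≥0∞) ∂μ :=
      (lintegral_rnDeriv_mul hQμ hfm).symm
    have hA : ∫⁻ ω, (‖f ω‖₊ : ℝ≥0∞) ^ p.toReal ∂μ < ∞ :=
      lintegral_rpow_enorm_lt_top_of_eLpNorm_lt_top hp0 hptop hf.2
    have hB : ∫⁻ ω, D ω ^ q.toReal ∂μ ≤ ENNReal.ofReal L :=
      le_trans (lintegral_mono fun ω => self_le_add_right _ _) hbd
    have hholder := ENNReal.lintegral_mul_le_Lp_mul_Lq μ hconj hfm hmeasD.aemeasurable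
    refine ⟨hsm, ?_⟩
    rw [hasFiniteIntegral_iff_norm]
    have hnorm : (∫⁻ ω, ENNReal.ofReal ‖f ω‖ ∂Q) = ∫⁻ ω, (‖f ω‖₊ : ℝ≥0∞) ∂Q := by
      congr 1
      ext ω
      simp only [ofReal_norm, enorm_eq_nnnorm]
    rw [hnorm, hQint]
    have hcomm : (∫⁻ ω, D ω * (‖f ω‖₊ : ℝ≥0∞) ∂μ) =
        ∫⁻ ω, ((fun ω => (‖f ω‖₊ : ℝ≥0∞)) * D) ω ∂μ := by
      congr 1
      ext ω
      simp [mul_comm]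
    rw [hcomm]
    refine lt_of_le_of_lt hholder (ENNReal.mul_lt_top ?_ ?_)
    · exact ENNReal.rpow_lt_top_of_nonneg (by positivity) hA.ne
    · exact ENNReal.rpow_lt_top_of_nonneg (by positivity)
        (lt_of_le_of_lt hB ENNReal.ofReal_lt_top).ne

/-- under (Sld), the operator `ℰ` is non-expansive and (strictly) monotone:
(i) `ℰ_{σ,τ}[ξ] - ℰ_{σ,τ}[ξ'] ≤ 𝔼^ℚ[|ξ - ξ'| | ℱ_σ]` a.s. for some `ℚ ∈ 𝒬`;
(ii) if `ξ ≤ ξ'` a.s. then `ℰ_{σ,τ}[ξ] ≤ ℰ_{σ,τ}[ξ']` a.s., with strict inequality a.s. on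
`{ℙ[ξ < ξ' | ℱ_σ] > 0}`. -/
theorem nonexpansive_and_strictly_monotone
    (μ : Measure Ω) [IsProbabilityMeasure μ] (ℱ : Filtration ℝ m0)
    (T : ℝ) (hT : 0 < T) (p q : ℝ≥0∞) (hp : 1 < p) (hpq : p⁻¹ + q⁻¹ = 1)
    (E : NLEOp Ω) (L : ℝ) (hL : 1 < L) (𝒬 : Set (Measure Ω))
    (hSld : Sld μ ℱ T p q E L 𝒬)
    (σ τ : Ω → ℝ) (hστ : MemT2 μ ℱ T σ τ)
    (hσ : IsStoppingTime ℱ (fun ω => (σ ω : WithTop ℝ)))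
    (ξ ξ' : Ω → ℝ) (hξ : MemLpAt μ ℱ p τ ξ) (hξ' : MemLpAt μ ℱ p τ ξ') :
    -- (i) non-expansiveness
    (∃ Q ∈ 𝒬,
      ∀ᵐ ω ∂μ, E σ τ ξ ω - E σ τ ξ' ω ≤
        (Q[fun ω' => |ξ ω' - ξ' ω'| | hσ.measurableSpace]) ω) ∧
    -- (ii) monotonicity and strict monotonicity
    ((∀ᵐ ω ∂μ, ξ ω ≤ ξ' ω) →
      (∀ᵐ ω ∂μ, E σ τ ξ ω ≤ E σ τ ξ' ω) ∧
      (∀ᵐ ω ∂μ,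
        0 < (μ[Set.indicator {ω' | ξ ω' < ξ' ω'} (fun _ => (1 : ℝ)) | hσ.measurableSpace]) ω →
        E σ τ ξ ω < E σ τ ξ' ω)) := by
  classical
  obtain ⟨hprob, hbd, _hconcat, hdom⟩ := hSld
  obtain ⟨Q, hQ, β, hβm, hβmem, hineq'⟩ := hdom σ τ hστ ξ ξ' hξ hξ'
  have hineq := hineq' hσ
  obtain ⟨hQprob, hQμ, hμQ⟩ := hprob Q hQ
  haveI : IsProbabilityMeasure Q := hQprob
  have hm : hσ.measurableSpace ≤ m0 := hσ.measurableSpace_le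
  have hLinv_pos : (0 : ℝ) < L⁻¹ := inv_pos.mpr (lt_trans one_pos hL)
  have hβpos : ∀ ω, 0 < β ω := fun ω => lt_of_lt_of_le hLinv_pos (hβmem ω).1
  have hβabs : ∀ ω, |β ω| ≤ 1 := fun ω =>
    abs_le.mpr ⟨by linarith [hβpos ω], (hβmem ω).2⟩
  -- integrability of ξ - ξ' under Q
  have hdint : Integrable (fun ω => ξ ω - ξ' ω) Q :=
    integrable_of_memLp_of_rnDeriv hp hpq hQμ (hbd Q hQ) (hξ.1.sub hξ'.1)
  have hβd_int : Integrable (fun ω => β ω * (ξ ω - ξ' ω)) Q := by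
    refine hdint.mono (hβm.aestronglyMeasurable.mul hdint.1) ?_
    filter_upwards with ω
    rw [Real.norm_eq_abs, Real.norm_eq_abs, abs_mul]
    exact mul_le_of_le_one_left (abs_nonneg _) (hβabs ω)
  constructor
  · -- (i) non-expansiveness
    refine ⟨Q, hQ, ?_⟩
    have habs : Integrable (fun ω => |ξ ω - ξ' ω|) Q := hdint.abs
    have hmono : Q[fun ω' => β ω' * (ξ ω' - ξ' ω')|hσ.measurableSpace] ≤ᵐ[Q]
        Q[fun ω' => |ξ ω' - ξ' ω'| | hσ.measurableSpace] := by
      refine condExp_mono hβd_int habs (Filter.Eventually.of_forall fun ω => ?_)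
      refine (le_abs_self _).trans ?_
      rw [abs_mul]
      exact mul_le_of_le_one_left (abs_nonneg _) (hβabs ω)
    filter_upwards [hineq, hmono.filter_mono hμQ.ae_le] with ω h1 h2
    linarith
  · -- (ii) monotonicity and strict monotonicity
    intro hle
    have hleQ : ∀ᵐ ω ∂Q, ξ ω ≤ ξ' ω := hle.filter_mono hQμ.ae_le
    set k : Ω → ℝ := fun ω => β ω * (ξ' ω - ξ ω) with hk_def
    have hkeq : (fun ω => -(β ω * (ξ ω - ξ' ω))) = k := by
      funext ω; rw [hk_def]; ring
    have hkint : Integrable k Q := hkeq ▸ hβd_int.neg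
    have hnegk : (fun ω' => β ω' * (ξ ω' - ξ' ω')) = -k := by
      funext ω; simp only [hk_def, Pi.neg_apply]; ring
    have hcondeq : Q[fun ω' => β ω' * (ξ ω' - ξ' ω')|hσ.measurableSpace] =ᵐ[Q]
        -(Q[k|hσ.measurableSpace]) := by
      rw [hnegk]; exact condExp_neg (μ := Q) (m := hσ.measurableSpace) k
    have hk_nonneg : 0 ≤ᵐ[Q] k := by
      filter_upwards [hleQ] with ω hω
      exact mul_nonneg (hβpos ω).le (by linarith)
    have hg_nonneg : 0 ≤ᵐ[Q] Q[k|hσ.measurableSpace] := condExp_nonneg hk_nonneg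
    constructor
    · -- monotonicity
      filter_upwards [hineq, hcondeq.filter_mono hμQ.ae_le,
        hg_nonneg.filter_mono hμQ.ae_le] with ω h1 h2 h3
      rw [h2] at h1
      simp only [Pi.neg_apply] at h1
      simp only [Pi.zero_apply] at h3
      linarith
    · -- strict monotonicity
      set g : Ω → ℝ := Q[k|hσ.measurableSpace] with hg_def
      set A : Set Ω := {ω | g ω ≤ 0} with hA_def
      have hAm : MeasurableSet[hσ.measurableSpace] A :=
        measurableSet_le (stronglyMeasurable_condExp (μ := Q) (f := k)
          (m := hσ.measurableSpace)).measurable measurable_const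
      have hAm0 : MeasurableSet A := hm _ hAm
      have hintA : ∫ ω in A, k ω ∂Q = ∫ ω in A, g ω ∂Q :=
        (setIntegral_condExp hm hkint hAm).symm
      have h2 : ∫ ω in A, g ω ∂Q ≤ 0 := setIntegral_nonpos hAm0 (fun ω hω => hω)
      have h3 : (0 : ℝ) ≤ ∫ ω in A, k ω ∂Q := setIntegral_nonneg_of_ae hk_nonneg
      have h4 : ∫ ω in A, k ω ∂Q = 0 := le_antisymm (hintA ▸ h2) h3
      have h5 : k =ᵐ[Q.restrict A] 0 :=
        (setIntegral_eq_zero_iff_of_nonneg_ae (ae_restrict_of_ae hk_nonneg)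
          hkint.integrableOn).mp h4
      have h6 : ∀ᵐ ω ∂Q, ω ∈ A → k ω = 0 := by
        have := (ae_restrict_iff' hAm0).mp h5
        filter_upwards [this] with ω hω hA
        simpa using hω hA
      -- the indicator
      have mτ : IsStoppingTime ℱ (fun ω => (τ ω : WithTop ℝ)) := hστ.2.1.1
      have hmξ : Measurable ξ := (hξ.2 mτ).mono mτ.measurableSpace_le le_rfl
      have hmξ' : Measurable ξ' := (hξ'.2 mτ).mono mτ.measurableSpace_le le_rfl
      have hs : MeasurableSet {ω' | ξ ω' < ξ' ω'} := measurableSet_lt hmξ hmξ'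
      have hind_int : Integrable (Set.indicator {ω' | ξ ω' < ξ' ω'} fun _ => (1 : ℝ)) μ :=
        (integrable_const (1 : ℝ)).indicator hs
      have h7 : ∀ᵐ ω ∂μ, ω ∈ A →
          Set.indicator {ω' | ξ ω' < ξ' ω'} (fun _ => (1 : ℝ)) ω = 0 := by
        filter_upwards [h6.filter_mono hμQ.ae_le] with ω hω hA
        have hk0 : k ω = 0 := hω hA
        have hβne : β ω ≠ 0 := (hβpos ω).ne'
        have hd0 : ξ' ω - ξ ω = 0 := by
          rcases mul_eq_zero.mp hk0 with h | h
          · exact absurd h hβne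
          · exact h
        have : ω ∉ {ω' | ξ ω' < ξ' ω'} := by
          simp only [Set.mem_setOf_eq, not_lt]
          linarith
        exact Set.indicator_of_notMem this _
      have h8 : (Set.indicator {ω' | ξ ω' < ξ' ω'} fun _ => (1 : ℝ)) =ᵐ[μ.restrict A] 0 := by
        rw [Filter.EventuallyEq]
        refine ((ae_restrict_iff' hAm0).mpr ?_)
        filter_upwards [h7] with ω hω hA
        simpa using hω hA
      have h9 : ∫ ω in A,
          (μ[Set.indicator {ω' | ξ ω' < ξ' ω'} (fun _ => (1 : ℝ))|hσ.measurableSpace]) ω ∂μ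
          = 0 := by
        rw [setIntegral_condExp hm hind_int hAm]
        rw [integral_congr_ae h8]
        simp
      have h10 : 0 ≤ᵐ[μ]
          μ[Set.indicator {ω' | ξ ω' < ξ' ω'} (fun _ => (1 : ℝ))|hσ.measurableSpace] :=
        condExp_nonneg (Filter.Eventually.of_forall fun ω =>
          Set.indicator_nonneg (fun _ _ => zero_le_one) ω)
      have h11 : (μ[Set.indicator {ω' | ξ ω' < ξ' ω'} (fun _ => (1 : ℝ))|hσ.measurableSpace])
          =ᵐ[μ.restrict A] 0 :=
        (setIntegral_eq_zero_iff_of_nonneg_ae (ae_restrict_of_ae h10)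
          integrable_condExp.integrableOn).mp h9
      have h12 : ∀ᵐ ω ∂μ, ω ∈ A →
          (μ[Set.indicator {ω' | ξ ω' < ξ' ω'} (fun _ => (1 : ℝ))|hσ.measurableSpace]) ω = 0 := by
        have := (ae_restrict_iff' hAm0).mp h11
        filter_upwards [this] with ω hω hA
        simpa using hω hA
      filter_upwards [hineq, hcondeq.filter_mono hμQ.ae_le, h12] with ω h1 h2 h3 hpos
      have hωA : ω ∉ A := by
        intro hA
        rw [h3 hA] at hpos
        exact lt_irrefl 0 hpos
      have hgpos : 0 < g ω := lt_of_not_ge hωA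
      rw [h2] at h1
      simp only [Pi.neg_apply] at h1
      calc E σ τ ξ ω ≤ E σ τ ξ' ω + -(g ω) := h1
        _ < E σ τ ξ' ω := by linarith

end BPT
end
end

section
/- Let T > 0 and let f : [0,T] → ℝ admit a right limit f(t+) := lim_{s↓t} f(s) at every t ∈ [0,T), with f(t) ≥ f(t+) for every t ∈ [0,T). Assume the total right-jump sum ∑_{s ∈ [0,T)} (f(s) − f(s+)), a (possibly uncountable) sum of nonnegative terms, is finite. Define I(t) := ∑_{s < t} (f(s) − f(s+)) for t ∈ [0,T]. Then: (i) I is nondecreasing on [0,T]; (ii) I is left-continuous on (0,T]; and (iii) the function f + I is right-continuous on [0,T), i.e. (f+I)(t+) = f(t) + I(t) for every t ∈ [0,T). -/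
open Filter Set Topology

noncomputable section

namespace BPT11

/-- `I(t) = ∑_{0 ≤ s < t} (f(s) - f(s+))`, the sum of the right-jumps of `f` before `t`,
where `fp s = f(s+)` is the right limit of `f` at `s`. -/
def jumpSum (f fp : ℝ → ℝ) (t : ℝ) : ℝ :=
  ∑' s : Set.Ico (0 : ℝ) t, (f s.1 - fp s.1)

/-- deterministic Mertens regularization: if `f : [0,T] → ℝ` admits right
limits `f(t+) = fp t` at every `t ∈ [0,T)`, with `f(t) ≥ f(t+)` there, and the total right-jump
sum (a sum of nonnegative terms over the uncountable index set `[0,T)`, i.e. the supremum of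
its finite partial sums) is finite, then `I(t) = ∑_{s<t} (f(s) - f(s+))` is nondecreasing on
`[0,T]`, left-continuous on `(0,T]`, and `f + I` is right-continuous on `[0,T)`. -/
theorem deterministic_mertens
    (T : ℝ) (hT : 0 < T) (f fp : ℝ → ℝ)
    (hright : ∀ t ∈ Set.Ico (0 : ℝ) T, Tendsto f (𝓝[>] t) (𝓝 (fp t)))
    (hjump : ∀ t ∈ Set.Ico (0 : ℝ) T, fp t ≤ f t)
    (hfin : ∃ M : ℝ, ∀ F : Finset (Set.Ico (0 : ℝ) T), ∑ s ∈ F, (f s.1 - fp s.1) ≤ M) :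
    -- (i) `I` is nondecreasing on `[0,T]`
    MonotoneOn (jumpSum f fp) (Set.Icc 0 T) ∧
    -- (ii) `I` is left-continuous on `(0,T]`
    (∀ t ∈ Set.Ioc (0 : ℝ) T, Tendsto (jumpSum f fp) (𝓝[<] t) (𝓝 (jumpSum f fp t))) ∧
    -- (iii) `f + I` is right-continuous on `[0,T)`: `(f+I)(t+) = f(t) + I(t)`
    (∀ t ∈ Set.Ico (0 : ℝ) T,
      Tendsto (fun s => f s + jumpSum f fp s) (𝓝[>] t) (𝓝 (f t + jumpSum f fp t))) := by
  obtain ⟨M, hM⟩ := hfin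
  set g : ℝ → ℝ := fun x => f x - fp x with hgdef
  set g0 : ℝ → ℝ := (Set.Ico (0 : ℝ) T).indicator g with hg0def
  have hg0nonneg : ∀ x, 0 ≤ g0 x := fun x =>
    Set.indicator_nonneg (fun y hy => sub_nonneg.2 (hjump y hy)) x
  have hsub : Summable (fun s : Set.Ico (0 : ℝ) T => g s.1) := by
    refine summable_of_sum_le (c := M) (fun s => sub_nonneg.2 (hjump s.1 s.2)) ?_
    intro u; exact hM u
  have hg0sum : Summable g0 := summable_subtype_iff_indicator.mp hsub
  -- representation of jumpSum via a global indicator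
  have hrep : ∀ t : ℝ, t ≤ T → jumpSum f fp t = ∑' x : ℝ, (Set.Ico (0 : ℝ) t).indicator g0 x := by
    intro t ht
    have h1 : (Set.Ico (0 : ℝ) t).indicator g0 = (Set.Ico (0 : ℝ) t).indicator g := by
      rw [hg0def, Set.indicator_indicator,
        Set.inter_eq_left.2 (Set.Ico_subset_Ico_right ht)]
    rw [jumpSum, tsum_subtype (Set.Ico (0 : ℝ) t) g, h1]
  -- tail estimate
  have tail : ∀ ε : ℝ, 0 < ε → ∃ F : Finset ℝ, ∀ A : Set ℝ, (∀ x ∈ F, x ∉ A) →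
      ∑' x, A.indicator g0 x < ε := by
    intro ε hε
    set S : ℝ := ∑' x, g0 x with hS
    have h1 : ∀ᶠ F : Finset ℝ in atTop, S - ε < ∑ x ∈ F, g0 x :=
      hg0sum.hasSum.eventually (eventually_gt_nhds (sub_lt_self S hε))
    obtain ⟨F, hF⟩ := h1.exists
    refine ⟨F, fun A hA => ?_⟩
    have hsumF : ∑ x ∈ F, g0 x = ∑' x, (↑F : Set ℝ).indicator g0 x := by
      rw [tsum_eq_sum (s := F) (fun b hb => Set.indicator_of_notMem (by simpa using hb) _)]
      exact (Finset.sum_congr rfl fun x hx =>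
        (Set.indicator_of_mem (by simpa using hx) _).symm)
    have hle : ∑ x ∈ F, g0 x + ∑' x, A.indicator g0 x ≤ S := by
      rw [hsumF, ← Summable.tsum_add (hg0sum.indicator _) (hg0sum.indicator _)]
      refine Summable.tsum_le_tsum (fun x => ?_) ((hg0sum.indicator _).add (hg0sum.indicator _)) hg0sum
      by_cases hxF : x ∈ F
      · have hxA : x ∉ A := hA x hxF
        simp [Set.indicator_of_mem (Finset.mem_coe.2 hxF), Set.indicator_of_notMem hxA]
      · simp only [Pi.add_apply, Set.indicator_of_notMem (by simpa using hxF :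
          x ∉ (↑F : Set ℝ)), zero_add]
        by_cases hxA : x ∈ A
        · simp [Set.indicator_of_mem hxA]
        · simp [Set.indicator_of_notMem hxA, hg0nonneg x]
    linarith
  -- (i) monotone
  have hmono : MonotoneOn (jumpSum f fp) (Set.Icc 0 T) := by
    intro a ha b hb hab
    rw [hrep a ha.2, hrep b hb.2]
    exact Summable.tsum_le_tsum
      (fun x => Set.indicator_le_indicator_of_subset
        (Set.Ico_subset_Ico_right hab) (fun y => hg0nonneg y) x)
      (hg0sum.indicator _) (hg0sum.indicator _)
  refine ⟨hmono, ?_, ?_⟩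
  · -- (ii) left continuity
    intro t ht
    rw [Metric.tendsto_nhdsWithin_nhds]
    intro ε hε
    obtain ⟨F, hF⟩ := tail ε hε
    set F' : Finset ℝ := insert 0 (F.filter (· ∈ Set.Ico (0 : ℝ) t)) with hF'
    have hF'ne : F'.Nonempty := ⟨0, Finset.mem_insert_self _ _⟩
    set t₀ : ℝ := F'.max' hF'ne with ht₀
    have ht₀lt : t₀ < t := by
      rw [ht₀, Finset.max'_lt_iff]
      intro x hx
      rcases Finset.mem_insert.1 hx with h | h
      · simpa [h] using ht.1
      · exact (Finset.mem_filter.1 h).2.2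
    have ht₀nonneg : (0 : ℝ) ≤ t₀ := Finset.le_max' _ 0 (Finset.mem_insert_self _ _)
    refine ⟨t - t₀, by linarith, fun {t'} ht' hdist => ?_⟩
    have ht'lt : t' < t := ht'
    have h1 : t₀ < t' := by
      rw [Real.dist_eq, abs_of_neg (by linarith : t' - t < 0), neg_sub] at hdist
      linarith
    have h0t' : (0 : ℝ) ≤ t' := le_of_lt (lt_of_le_of_lt ht₀nonneg h1)
    have hsplit : jumpSum f fp t = jumpSum f fp t' + ∑' x, (Set.Ico t' t).indicator g0 x := by
      rw [hrep t ht.2, hrep t' (le_trans ht'lt.le ht.2)]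
      have hptw : ∀ x, (Set.Ico (0 : ℝ) t).indicator g0 x
          = (Set.Ico (0 : ℝ) t').indicator g0 x + (Set.Ico t' t).indicator g0 x := by
        intro x
        have h := Set.indicator_union_of_disjoint (Set.Ico_disjoint_Ico_same
          (a := (0:ℝ)) (b := t') (c := t)) g0
        rw [Set.Ico_union_Ico_eq_Ico h0t' ht'lt.le] at h
        exact congrFun h x
      rw [tsum_congr hptw, Summable.tsum_add (hg0sum.indicator _) (hg0sum.indicator _)]
    have htail : ∑' x, (Set.Ico t' t).indicator g0 x < ε := by
      refine hF _ (fun x hxF hxA => ?_)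
      have hmem : x ∈ F' := Finset.mem_insert.2 (Or.inr (Finset.mem_filter.2
        ⟨hxF, ⟨le_trans h0t' hxA.1, hxA.2⟩⟩))
      have := Finset.le_max' _ x hmem
      have := hxA.1
      linarith
    have hnn : (0 : ℝ) ≤ ∑' x, (Set.Ico t' t).indicator g0 x :=
      tsum_nonneg (fun x => Set.indicator_nonneg (fun y _ => hg0nonneg y) x)
    rw [Real.dist_eq, abs_of_nonpos (by linarith), neg_sub]
    linarith
  · -- (iii) right continuity of f + I
    intro t ht
    have hg0t : g0 t = f t - fp t := by rw [hg0def, Set.indicator_of_mem ht]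
    have hIlim : Tendsto (jumpSum f fp) (𝓝[>] t) (𝓝 (jumpSum f fp t + g0 t)) := by
      rw [Metric.tendsto_nhdsWithin_nhds]
      intro ε hε
      obtain ⟨F, hF⟩ := tail ε hε
      set F' : Finset ℝ := insert T (F.filter (fun x => t < x)) with hF'
      have hF'ne : F'.Nonempty := ⟨T, Finset.mem_insert_self _ _⟩
      set t₁ : ℝ := F'.min' hF'ne with ht₁
      have ht₁gt : t < t₁ := by
        rw [ht₁, Finset.lt_min'_iff]
        intro x hx
        rcases Finset.mem_insert.1 hx with h | h
        · simpa [h] using ht.2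
        · exact (Finset.mem_filter.1 h).2
      have ht₁T : t₁ ≤ T := Finset.min'_le _ T (Finset.mem_insert_self _ _)
      refine ⟨t₁ - t, by linarith, fun {s} hs hdist => ?_⟩
      have hts : t < s := hs
      have h1 : s < t₁ := by
        rw [Real.dist_eq, abs_of_pos (by linarith : (0:ℝ) < s - t)] at hdist
        linarith
      have hsT : s ≤ T := le_trans h1.le ht₁T
      have hsplit : jumpSum f fp s
          = jumpSum f fp t + g0 t + ∑' x, (Set.Ioo t s).indicator g0 x := by
        rw [hrep s hsT, hrep t (le_trans hts.le hsT)]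
        have h1 : ∀ x, (Set.Ico t s).indicator g0 x
            = ({t} : Set ℝ).indicator g0 x + (Set.Ioo t s).indicator g0 x := by
          intro x
          have h := Set.indicator_union_of_disjoint (by
              simp [Set.disjoint_singleton_left] : Disjoint ({t} : Set ℝ) (Set.Ioo t s)) g0
          rw [Set.singleton_union, Set.Ioo_insert_left hts] at h
          exact congrFun h x
        have h2 : ∀ x, (Set.Ico (0 : ℝ) s).indicator g0 x
            = (Set.Ico (0 : ℝ) t).indicator g0 x + (Set.Ico t s).indicator g0 x := by
          intro x
          have h := Set.indicator_union_of_disjoint (Set.Ico_disjoint_Ico_same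
            (a := (0:ℝ)) (b := t) (c := s)) g0
          rw [Set.Ico_union_Ico_eq_Ico ht.1 hts.le] at h
          exact congrFun h x
        have hsing : ∑' x, ({t} : Set ℝ).indicator g0 x = g0 t := by
          rw [tsum_eq_single t (fun b hb => Set.indicator_of_notMem (by simpa using hb) _)]
          simp
        have hptw : ∀ x, (Set.Ico (0 : ℝ) s).indicator g0 x
            = (Set.Ico (0 : ℝ) t).indicator g0 x
              + (({t} : Set ℝ).indicator g0 x + (Set.Ioo t s).indicator g0 x) := by
          intro x; rw [h2 x, h1 x]
        rw [tsum_congr hptw,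
          Summable.tsum_add (hg0sum.indicator _) ((hg0sum.indicator _).add (hg0sum.indicator _)),
          Summable.tsum_add (hg0sum.indicator _) (hg0sum.indicator _), hsing]
        ring
      have htail : ∑' x, (Set.Ioo t s).indicator g0 x < ε := by
        refine hF _ (fun x hxF hxA => ?_)
        have hmem : x ∈ F' := Finset.mem_insert.2 (Or.inr (Finset.mem_filter.2 ⟨hxF, hxA.1⟩))
        have := Finset.min'_le _ x hmem
        have := hxA.2
        linarith
      have hnn : (0 : ℝ) ≤ ∑' x, (Set.Ioo t s).indicator g0 x :=
        tsum_nonneg (fun x => Set.indicator_nonneg (fun y _ => hg0nonneg y) x)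
      rw [Real.dist_eq, abs_of_nonneg (by linarith)]
      linarith
    have hcomb : Tendsto (fun s => f s + jumpSum f fp s) (𝓝[>] t)
        (𝓝 (fp t + (jumpSum f fp t + g0 t))) := (hright t ht).add hIlim
    have heq : fp t + (jumpSum f fp t + g0 t) = f t + jumpSum f fp t := by
      rw [hg0t]; ring
    rwa [heq] at hcomb

end BPT11
end
end
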